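/- arXiv:2402.06920 — 4 statements merged into one kernel-verified Lean document; each statement's English description precedes it below -/
import Mathlib

section
/- Let N be a positive integer and P a probability measure. Suppose S is a test martingale with respect to a sub-filtration (F'_n) of the natural filtration (F_n) (i.e., F'_n ⊆ F_n for all n), with each S_n F_n-measurable. Define S̃_N := S_N and S̃_n := E[S̃_{n+1} | F_n] for n < N. Then S̃ is a test martingale with respect to (F_n) and S̃_N = S_N. -/
open MeasureTheory Filter

/-- Finite-horizon version of Proposition 1: a test martingale `S` w.r.t. a sub-filtration
`ℱ'` of the natural filtration `ℱ` can be matched at the horizon `N` by a test martingale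
`T` w.r.t. `ℱ`, obtained by backward averaging. -/
theorem stmt1 {Ω : Type*} {m0 : MeasurableSpace Ω} (μ : Measure Ω) [IsProbabilityMeasure μ]
    (ℱ ℱ' : Filtration ℕ m0) (hle : ∀ n, ℱ' n ≤ ℱ n) (hF0 : ℱ 0 = ⊥) (N : ℕ) (hN : 0 < N)
    (S : ℕ → Ω → ℝ)
    (hS : Martingale S ℱ' μ) (hS0 : S 0 =ᵐ[μ] (fun _ => 1)) (hSnonneg : ∀ n, 0 ≤ᵐ[μ] S n)
    (T : ℕ → Ω → ℝ)
    (hTN : T N = S N)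
    (hTrec : ∀ n < N, T n = μ[T (n + 1) | ℱ n]) :
    (∀ n ≤ N, StronglyMeasurable[ℱ n] (T n)) ∧
    (∀ n ≤ N, 0 ≤ᵐ[μ] T n) ∧
    (∀ m n, m ≤ n → n ≤ N → μ[T n | ℱ m] =ᵐ[μ] T m) ∧
    T 0 =ᵐ[μ] (fun _ => 1) ∧
    T N = S N := by
  -- strong measurability
  have hmeas : ∀ n ≤ N, StronglyMeasurable[ℱ n] (T n) := by
    intro n hn
    rcases eq_or_lt_of_le hn with rfl | hlt
    · rw [hTN]; exact (hS.stronglyMeasurable n).mono (hle n)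
    · rw [hTrec n hlt]; exact stronglyMeasurable_condExp
  -- integrability
  have hint : ∀ n ≤ N, Integrable (T n) μ := by
    intro n hn
    rcases eq_or_lt_of_le hn with rfl | hlt
    · rw [hTN]; exact hS.integrable n
    · rw [hTrec n hlt]; exact integrable_condExp
  -- nonnegativity, by downward induction
  have hnonneg : ∀ k, ∀ n, n + k = N → 0 ≤ᵐ[μ] T n := by
    intro k
    induction k with
    | zero => intro n hn; rw [Nat.add_zero] at hn; subst hn; rw [hTN]; exact hSnonneg _
    | succ k ih =>
      intro n hn
      have hlt : n < N := by omega
      rw [hTrec n hlt]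
      exact condExp_nonneg (ih (n + 1) (by omega))
  have hnonneg' : ∀ n ≤ N, 0 ≤ᵐ[μ] T n := fun n hn => hnonneg (N - n) n (by omega)
  -- martingale property
  have hmart : ∀ k, ∀ m, m + k ≤ N → μ[T (m + k) | ℱ m] =ᵐ[μ] T m := by
    intro k
    induction k with
    | zero =>
      intro m hm
      rw [Nat.add_zero] at hm ⊢
      rw [condExp_of_stronglyMeasurable (ℱ.le m) (hmeas m hm) (hint m hm)]
    | succ k ih =>
      intro m hm
      have hlt : m + k < N := by omega
      have h1 : T (m + k) = μ[T (m + k + 1) | ℱ (m + k)] := hTrec (m + k) hlt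
      have h2 : μ[μ[T (m + k + 1) | ℱ (m + k)] | ℱ m] =ᵐ[μ] μ[T (m + k + 1) | ℱ m] :=
        condExp_condExp_of_le (ℱ.mono (Nat.le_add_right m k)) (ℱ.le (m + k))
      calc μ[T (m + (k + 1)) | ℱ m] = μ[T (m + k + 1) | ℱ m] := by ring_nf
        _ =ᵐ[μ] μ[μ[T (m + k + 1) | ℱ (m + k)] | ℱ m] := h2.symm
        _ = μ[T (m + k) | ℱ m] := by rw [← h1]
        _ =ᵐ[μ] T m := ih m (by omega)
  have hmart' : ∀ m n, m ≤ n → n ≤ N → μ[T n | ℱ m] =ᵐ[μ] T m := by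
    intro m n hmn hn
    have := hmart (n - m) m (by omega)
    rwa [Nat.add_sub_cancel' hmn] at this
  -- initial value
  have hT0 : T 0 =ᵐ[μ] (fun _ => 1) := by
    have h1 : μ[T N | ℱ 0] =ᵐ[μ] T 0 := hmart' 0 N (Nat.zero_le N) le_rfl
    have h2 : μ[T N | ℱ 0] = fun _ => ∫ x, T N x ∂μ := by
      rw [hF0]; exact condExp_bot (T N)
    have h3 : ∫ x, T N x ∂μ = 1 := by
      rw [hTN]
      have h4 : μ[S N | ℱ' 0] =ᵐ[μ] S 0 := hS.condExp_ae_eq (Nat.zero_le N)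
      have h5 : ∫ x, (μ[S N | ℱ' 0]) x ∂μ = ∫ x, S N x ∂μ :=
        integral_condExp (ℱ'.le 0) (f := S N)
      rw [← h5, integral_congr_ae h4, integral_congr_ae hS0]
      simp
    refine h1.symm.trans ?_
    rw [h2]
    exact Filter.Eventually.of_forall fun x => h3
  exact ⟨hmeas, hnonneg', hmart', hT0, hTN⟩
end

section
/- Let μ ∈ ℝ, and let f: ℝ → [0,∞) be a measurable function satisfying f(z) ≥ max( N(μ,1)([z−1, z+1]) / N(0,2)([−1,1]), 1 ) for all z ∈ ℝ. Then ∫ f dN(μ,1) > 1. -/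
open MeasureTheory ProbabilityTheory

lemma gauss_pos (m : ℝ) (v : NNReal) (hv : v ≠ 0) {s : Set ℝ}
    (hs : MeasureTheory.volume s ≠ 0) : 0 < gaussianReal m v s := by
  rw [pos_iff_ne_zero]
  intro h
  exact hs ((gaussianReal_absolutelyContinuous' m hv) h)

lemma sqrt2_inv_lt : (Real.sqrt 2)⁻¹ < 4/5 := by
  have h : (5/4 : ℝ) < Real.sqrt 2 := by
    rw [show (5/4 : ℝ) = Real.sqrt ((5/4)^2) by rw [Real.sqrt_sq]; norm_num]
    apply Real.sqrt_lt_sqrt <;> norm_num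
  have h2 : (0:ℝ) < 5/4 := by norm_num
  calc (Real.sqrt 2)⁻¹ < (5/4 : ℝ)⁻¹ := by
        apply inv_strictAnti₀ h2 h
    _ = 4/5 := by norm_num

lemma key (μ : ℝ) : gaussianReal 0 2 (Set.Icc (-1:ℝ) 1)
    < gaussianReal μ 1 (Set.Icc (μ - 4/5) (μ + 4/5)) := by
  have hsqrt : (0:ℝ) < Real.sqrt 2 := Real.sqrt_pos.mpr (by norm_num)
  set a : ℝ := (Real.sqrt 2)⁻¹ with ha
  have ha08 : a < 4/5 := sqrt2_inv_lt
  have ha0 : 0 < a := inv_pos.mpr hsqrt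
  -- rewrite gaussianReal 0 2
  have hmap2 : (gaussianReal 0 1).map (Real.sqrt 2 * ·) = gaussianReal 0 2 := by
    rw [gaussianReal_map_const_mul]
    congr 1
    · ring
    · ext
      push_cast
      rw [Real.sq_sqrt (by norm_num : (0:ℝ) ≤ 2)]
      ring
  have h2 : gaussianReal 0 2 (Set.Icc (-1:ℝ) 1) = gaussianReal 0 1 (Set.Icc (-a) a) := by
    rw [← hmap2, Measure.map_apply (by fun_prop) measurableSet_Icc,
      Set.preimage_const_mul_Icc₀ _ _ hsqrt]
    congr 1
    rw [neg_div, one_div]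
  -- rewrite gaussianReal μ 1
  have hmap1 : (gaussianReal 0 1).map (· + μ) = gaussianReal μ 1 := by
    rw [gaussianReal_map_add_const, zero_add]
  have h1 : gaussianReal μ 1 (Set.Icc (μ - 4/5) (μ + 4/5))
      = gaussianReal 0 1 (Set.Icc (-(4/5) : ℝ) (4/5)) := by
    rw [← hmap1, Measure.map_apply (by fun_prop) measurableSet_Icc,
      Set.preimage_add_const_Icc]
    ring_nf
  rw [h1, h2]
  have hdisj : Disjoint (Set.Icc (-a) a) (Set.Ioc a (4/5)) := by
    rw [Set.disjoint_left]
    rintro x ⟨_, hx2⟩ ⟨hx3, _⟩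
    exact absurd hx2 (not_le.mpr hx3)
  have hunion : gaussianReal 0 1 (Set.Icc (-a) a ∪ Set.Ioc a (4/5))
      = gaussianReal 0 1 (Set.Icc (-a) a) + gaussianReal 0 1 (Set.Ioc a (4/5)) :=
    measure_union hdisj measurableSet_Ioc
  have hsub : Set.Icc (-a) a ∪ Set.Ioc a (4/5) ⊆ Set.Icc (-(4/5) : ℝ) (4/5) := by
    rintro x (⟨h1, h2⟩ | ⟨h1, h2⟩)
    · exact ⟨by linarith, by linarith⟩
    · exact ⟨by linarith, h2⟩
  calc gaussianReal 0 1 (Set.Icc (-a) a)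
      < gaussianReal 0 1 (Set.Icc (-a) a) + gaussianReal 0 1 (Set.Ioc a (4/5)) := by
        apply ENNReal.lt_add_right (measure_ne_top _ _)
        exact (gauss_pos 0 1 (by norm_num) (by rw [Real.volume_Ioc]; simp; linarith)).ne'
    _ = gaussianReal 0 1 (Set.Icc (-a) a ∪ Set.Ioc a (4/5)) := hunion.symm
    _ ≤ gaussianReal 0 1 (Set.Icc (-(4/5) : ℝ) (4/5)) := measure_mono hsub

/-- Key step in Section 5.1: any measurable nonnegative `f` dominating both `1` and
`z ↦ N(μ,1)([z−1,z+1]) / N(0,2)([−1,1])` has `N(μ,1)`-integral strictly greater than 1. -/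
theorem stmt11 (μ : ℝ) (f : ℝ → ℝ) (hf : Measurable f) (hf0 : ∀ z, 0 ≤ f z)
    (hdom : ∀ z : ℝ,
      max ((gaussianReal μ 1 (Set.Icc (z - 1) (z + 1))).toReal /
          (gaussianReal 0 2 (Set.Icc (-1 : ℝ) 1)).toReal) 1 ≤ f z) :
    1 < ∫⁻ z, ENNReal.ofReal (f z) ∂(gaussianReal μ 1) := by
  set ν := gaussianReal μ 1 with hν
  set c2 := gaussianReal 0 2 (Set.Icc (-1:ℝ) 1) with hc2
  set m := ν (Set.Icc (μ - 4/5) (μ + 4/5)) with hm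
  have hkey : c2 < m := key μ
  have hc2pos : 0 < c2 :=
    gauss_pos _ _ (by norm_num) (by rw [Real.volume_Icc]; norm_num)
  have hc2top : c2 ≠ ⊤ := measure_ne_top _ _
  have hmtop : m ≠ ⊤ := measure_ne_top _ _
  set r : ℝ := m.toReal / c2.toReal with hr
  have hcR : 0 < c2.toReal := ENNReal.toReal_pos hc2pos.ne' hc2top
  have hr1 : 1 < r := by
    rw [hr, lt_div_iff₀ hcR, one_mul]
    exact (ENNReal.toReal_lt_toReal hc2top hmtop).mpr hkey
  set A := Set.Icc (μ - 1/5) (μ + 1/5) with hA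
  have hAm : MeasurableSet A := measurableSet_Icc
  have hνA : 0 < ν A :=
    gauss_pos _ _ (by norm_num) (by rw [Real.volume_Icc]; norm_num)
  have hνAtop : ν A ≠ ⊤ := measure_ne_top _ _
  -- pointwise bound
  have hpt : ∀ z, Set.indicator A (fun _ => ENNReal.ofReal r) z + Set.indicator Aᶜ 1 z
      ≤ ENNReal.ofReal (f z) := by
    intro z
    by_cases hz : z ∈ A
    · rw [Set.indicator_of_mem hz, Set.indicator_of_notMem (by simp [hz]), add_zero]
      apply ENNReal.ofReal_le_ofReal
      refine le_trans ?_ (le_trans (le_max_left _ _) (hdom z))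
      rw [hr]
      gcongr
      · exact measure_ne_top _ _
      · apply measure_mono
        obtain ⟨hz1, hz2⟩ := hz
        intro x ⟨hx1, hx2⟩
        exact ⟨by linarith, by linarith⟩
    · rw [Set.indicator_of_notMem hz, Set.indicator_of_mem (by simp [hz]), zero_add,
        Pi.one_apply]
      rw [show (1 : ENNReal) = ENNReal.ofReal 1 by simp]
      exact ENNReal.ofReal_le_ofReal (le_trans (le_max_right _ _) (hdom z))
  have hint : (1 : ENNReal) <
      ∫⁻ z, (Set.indicator A (fun _ => ENNReal.ofReal r) z + Set.indicator Aᶜ 1 z) ∂ν := by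
    rw [lintegral_add_left (by exact (measurable_const.indicator hAm)),
      lintegral_indicator hAm _, lintegral_indicator hAm.compl _]
    simp only [lintegral_const, Measure.restrict_apply_univ, Pi.one_apply, setLIntegral_one, one_mul]
    have h1 : ν A + ν Aᶜ = 1 := by
      rw [measure_add_measure_compl hAm, measure_univ]
    calc (1 : ENNReal) = ν A + ν Aᶜ := h1.symm
      _ < ENNReal.ofReal r * ν A + ν Aᶜ := by
          gcongr ?_ + _
          · exact measure_ne_top _ _
          · calc ν A = 1 * ν A := (one_mul _).symm
              _ < ENNReal.ofReal r * ν A := by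
                  apply ENNReal.mul_lt_mul_iff_left hνA.ne' hνAtop |>.mpr
                  rw [show (1:ENNReal) = ENNReal.ofReal 1 by simp]
                  exact ENNReal.ofReal_lt_ofReal_iff (by linarith) |>.mpr hr1
  refine lt_of_lt_of_le hint (lintegral_mono hpt)
end

section
/- Let N, N0, N1, K, k0, k1, π0, π1 be as in the changepoint setting with k0 + k1 = K. Then the conditional probability under Q of a specific sequence z (with k0 ones in the first block and k1 in the second) given that the total number of ones is K equals 1 / ( Σ_{k=max(K−N0,0)}^{min(K,N1)} C(N0, K−k) C(N1, k) ρ^{k−k1} ), where ρ := (1−π0)π1 / (π0(1−π1)). -/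
open MeasureTheory ProbabilityTheory Finset

lemma card_B0 (N0 N1 : ℕ) :
    (univ.filter fun i : Fin (N0+N1) => (i:ℕ) < N0).card = N0 := by
  rw [Finset.card_filter]
  rw [Fin.sum_univ_eq_sum_range (fun j => if j < N0 then (1:ℕ) else 0)]
  rw [← Finset.card_filter]
  have : (Finset.range (N0+N1)).filter (fun j => j < N0) = Finset.range N0 := by
    ext j; simp; omega
  rw [this, Finset.card_range]

lemma card_B1 (N0 N1 : ℕ) :
    (univ.filter fun i : Fin (N0+N1) => ¬ (i:ℕ) < N0).card = N1 := by
  have h := Finset.card_filter_add_card_filter_not (s := (univ : Finset (Fin (N0+N1))))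
    (fun i => (i:ℕ) < N0)
  rw [card_B0] at h
  simp only [Finset.card_univ, Fintype.card_fin] at h
  omega

def aC (N0 N1 : ℕ) (w : Fin (N0+N1) → Bool) : ℕ :=
  (univ.filter fun i : Fin (N0+N1) => (i:ℕ) < N0 ∧ w i = true).card
def bC (N0 N1 : ℕ) (w : Fin (N0+N1) → Bool) : ℕ :=
  (univ.filter fun i : Fin (N0+N1) => N0 ≤ (i:ℕ) ∧ w i = true).card

lemma aC_le (N0 N1 : ℕ) (w : Fin (N0+N1) → Bool) : aC N0 N1 w ≤ N0 :=
  le_trans (Finset.card_le_card (by intro i hi; simp at hi ⊢; exact hi.1))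
    (le_of_eq (card_B0 N0 N1))

lemma bC_le (N0 N1 : ℕ) (w : Fin (N0+N1) → Bool) : bC N0 N1 w ≤ N1 :=
  le_trans (Finset.card_le_card (by intro i hi; simp at hi ⊢; omega))
    (le_of_eq (card_B1 N0 N1))

lemma total_card (N0 N1 : ℕ) (w : Fin (N0+N1) → Bool) :
    (univ.filter fun i => w i = true).card = aC N0 N1 w + bC N0 N1 w := by
  unfold aC bC
  rw [← Finset.card_union_of_disjoint]
  · congr 1
    ext i
    simp only [Finset.mem_filter, Finset.mem_univ, true_and, Finset.mem_union]
    constructor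
    · intro hw
      rcases lt_or_ge (i:ℕ) N0 with h|h
      · exact Or.inl ⟨h, hw⟩
      · exact Or.inr ⟨h, hw⟩
    · rintro (⟨_,hw⟩|⟨_,hw⟩) <;> exact hw
  · rw [Finset.disjoint_filter]
    intro i _ h1 h2
    omega

lemma count_AB (N0 N1 A B : ℕ) :
    ((univ : Finset (Fin (N0+N1) → Bool)).filter
       fun w => aC N0 N1 w = A ∧ bC N0 N1 w = B).card = N0.choose A * N1.choose B := by
  have key : ((univ : Finset (Fin (N0+N1) → Bool)).filter
       fun w => aC N0 N1 w = A ∧ bC N0 N1 w = B).card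
      = ((Finset.powersetCard A (univ.filter fun i : Fin (N0+N1) => (i:ℕ) < N0)) ×ˢ
         (Finset.powersetCard B (univ.filter fun i : Fin (N0+N1) => ¬(i:ℕ) < N0))).card := by
    have hfs : ∀ s t : Finset (Fin (N0+N1)),
        s ⊆ (univ.filter fun i : Fin (N0+N1) => (i:ℕ) < N0) →
        t ⊆ (univ.filter fun i : Fin (N0+N1) => ¬(i:ℕ) < N0) →
        (univ.filter fun i : Fin (N0+N1) =>
            (i:ℕ) < N0 ∧ (decide (i ∈ s ∨ i ∈ t)) = true) = s ∧
        (univ.filter fun i : Fin (N0+N1) =>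
            N0 ≤ (i:ℕ) ∧ (decide (i ∈ s ∨ i ∈ t)) = true) = t := by
      intro s t hs ht
      constructor <;> ext i <;>
        simp only [mem_filter, mem_univ, true_and, decide_eq_true_eq]
      · constructor
        · rintro ⟨h1, (h|h)⟩
          · exact h
          · exact absurd h1 (by have := ht h; simp at this; omega)
        · intro h
          exact ⟨by have := hs h; simpa using this, Or.inl h⟩
      · constructor
        · rintro ⟨h1, (h|h)⟩
          · exact absurd h1 (by have := hs h; simp at this; omega)
          · exact h
        · intro h
          refine ⟨by have := ht h; simp at this; omega, Or.inr h⟩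
    apply Finset.card_bij'
      (i := fun w _ => ((univ.filter fun i : Fin (N0+N1) => (i:ℕ) < N0 ∧ w i = true),
                        (univ.filter fun i : Fin (N0+N1) => N0 ≤ (i:ℕ) ∧ w i = true)))
      (j := fun st _ => fun i => decide (i ∈ st.1 ∨ i ∈ st.2))
    · intro w hw
      simp only [Finset.mem_filter, Finset.mem_univ, true_and] at hw
      simp only [Finset.mem_product, Finset.mem_powersetCard]
      refine ⟨⟨?_, hw.1⟩, ?_, hw.2⟩
      · intro i hi; simp at hi ⊢; exact hi.1
      · intro i hi; simp at hi ⊢; omega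
    · intro st hst
      simp only [Finset.mem_product, Finset.mem_powersetCard] at hst
      obtain ⟨⟨hs, hsA⟩, ht, htB⟩ := hst
      obtain ⟨e1, e2⟩ := hfs st.1 st.2 hs ht
      simp only [Finset.mem_filter, Finset.mem_univ, true_and]
      unfold aC bC
      rw [e1, e2]
      exact ⟨hsA, htB⟩
    · intro w hw
      funext i
      rcases lt_or_ge (i:ℕ) N0 with h|h <;> cases hwi : w i <;>
        simp [h, hwi] <;> omega
    · intro st hst
      simp only [Finset.mem_product, Finset.mem_powersetCard] at hst
      obtain ⟨⟨hs, _⟩, ht, _⟩ := hst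
      obtain ⟨e1, e2⟩ := hfs st.1 st.2 hs ht
      exact Prod.ext e1 e2
  rw [key, Finset.card_product, Finset.card_powersetCard, Finset.card_powersetCard,
    card_B0, card_B1]

lemma meas_finset {α : Type*} [MeasurableSpace α] [MeasurableSingletonClass α]
    (μ : Measure α) (s : Finset α) : μ ↑s = ∑ x ∈ s, μ {x} := by
  have := MeasureTheory.sum_measure_preimage_singleton (μ := μ) s
    (f := id) (fun b _ => measurableSet_singleton b)
  simpa using this.symm

lemma prod_bif {α : Type*} [DecidableEq α] (s : Finset α) (w : α → Bool) (p q : ENNReal) :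
    ∏ i ∈ s, (bif w i then p else q)
    = p ^ (s.filter (fun i => w i = true)).card
      * q ^ (s.card - (s.filter (fun i => w i = true)).card) := by
  rw [← Finset.prod_filter_mul_prod_filter_not s (fun i => w i = true)]
  congr 1
  · rw [Finset.prod_congr rfl (fun i hi => ?_), Finset.prod_const]
    simp only [Finset.mem_filter] at hi
    rw [hi.2, Bool.cond_true]
  · rw [Finset.prod_congr rfl (fun i hi => ?_), Finset.prod_const]
    · congr 1
      have := Finset.card_filter_add_card_filter_not
        (s := s) (fun i => w i = true)
      omega
    · simp only [Finset.mem_filter] at hi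
      rw [Bool.not_eq_true] at hi
      rw [hi.2]; rfl

lemma singleton_meas (N0 N1 : ℕ) (p0 p1 : ENNReal) (h0u : p0 ≤ 1) (h1u : p1 ≤ 1)
    (hB0 : (univ.filter fun i : Fin (N0+N1) => (i:ℕ) < N0).card = N0)
    (hB1 : (univ.filter fun i : Fin (N0+N1) => ¬ (i:ℕ) < N0).card = N1)
    (w : Fin (N0+N1) → Bool) :
    Measure.pi (fun i : Fin (N0+N1) =>
      if (i:ℕ) < N0 then (PMF.bernoulli p0.toNNReal (by simpa using ENNReal.toNNReal_mono ENNReal.one_ne_top h0u)).toMeasure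
      else (PMF.bernoulli p1.toNNReal (by simpa using ENNReal.toNNReal_mono ENNReal.one_ne_top h1u)).toMeasure) {w}
    = p0 ^ (aC N0 N1 w) * (1-p0) ^ (N0 - aC N0 N1 w)
      * (p1 ^ (bC N0 N1 w) * (1-p1) ^ (N1 - bC N0 N1 w)) := by
  haveI : ∀ i : Fin (N0+N1), SigmaFinite
      (if (i:ℕ) < N0 then (PMF.bernoulli p0.toNNReal (by simpa using ENNReal.toNNReal_mono ENNReal.one_ne_top h0u)).toMeasure
        else (PMF.bernoulli p1.toNNReal (by simpa using ENNReal.toNNReal_mono ENNReal.one_ne_top h1u)).toMeasure) := by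
    intro i; split <;> infer_instance
  rw [← Set.univ_pi_singleton w, Measure.pi_pi]
  have hterm : ∀ i : Fin (N0+N1),
      (if (i:ℕ) < N0 then (PMF.bernoulli p0.toNNReal (by simpa using ENNReal.toNNReal_mono ENNReal.one_ne_top h0u)).toMeasure
        else (PMF.bernoulli p1.toNNReal (by simpa using ENNReal.toNNReal_mono ENNReal.one_ne_top h1u)).toMeasure) {w i}
      = if (i:ℕ) < N0 then (bif w i then p0 else 1-p0)
        else (bif w i then p1 else 1-p1) := by
    intro i
    split <;>
      rw [PMF.toMeasure_apply_singleton _ _ (measurableSet_singleton _)] <;>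
      refine (PMF.bernoulli_apply _ _).trans ?_
    · cases w i <;> simp [ENNReal.coe_sub, ENNReal.coe_toNNReal (ne_top_of_le_ne_top ENNReal.one_ne_top h0u)]
    · cases w i <;> simp [ENNReal.coe_sub, ENNReal.coe_toNNReal (ne_top_of_le_ne_top ENNReal.one_ne_top h1u)]
  rw [Finset.prod_congr rfl (fun i _ => hterm i)]
  rw [← Finset.prod_filter_mul_prod_filter_not univ (fun i : Fin (N0+N1) => (i:ℕ) < N0)]
  congr 1
  · rw [Finset.prod_congr rfl
      (fun i hi => if_pos (by simpa using (Finset.mem_filter.mp hi).2))]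
    rw [prod_bif]
    rw [Finset.filter_filter, hB0]
    rfl
  · rw [Finset.prod_congr rfl
      (fun i hi => if_neg (by simpa using (Finset.mem_filter.mp hi).2))]
    rw [prod_bif]
    rw [Finset.filter_filter, hB1]
    have : (univ.filter fun i : Fin (N0+N1) => ¬(i:ℕ) < N0 ∧ w i = true)
        = (univ.filter fun i : Fin (N0+N1) => N0 ≤ (i:ℕ) ∧ w i = true) := by
      ext i; simp [Nat.not_lt]
    rw [this]
    rfl

lemma term_eq (N0 N1 : ℕ) (p0 p1 ρ : ENNReal)
    (h0l : 0 < p0) (h0u : p0 < 1) (h1l : 0 < p1) (h1u : p1 < 1)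
    (hρ : ρ = (1 - p0) * p1 / (p0 * (1 - p1)))
    (K k0 k1 k : ℕ) (hK : k0 + k1 = K) (hk0N : k0 ≤ N0) (hk1N : k1 ≤ N1)
    (hkK : k ≤ K) (hkN1 : k ≤ N1) (hKk : K - k ≤ N0) :
    p0 ^ (K - k) * (1 - p0) ^ (N0 - (K - k)) * (p1 ^ k * (1 - p1) ^ (N1 - k))
      = ρ ^ ((k : ℤ) - (k1 : ℤ))
        * (p0 ^ k0 * (1 - p0) ^ (N0 - k0) * (p1 ^ k1 * (1 - p1) ^ (N1 - k1))) := by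
  have hp0t : p0 ≠ ⊤ := (h0u.trans (by simp)).ne
  have hp1t : p1 ≠ ⊤ := (h1u.trans (by simp)).ne
  have hq0z : (1 - p0) ≠ 0 := by simp [tsub_eq_zero_iff_le, not_le, h0u]
  have hq1z : (1 - p1) ≠ 0 := by simp [tsub_eq_zero_iff_le, not_le, h1u]
  have hq0t : (1 - p0) ≠ ⊤ := (lt_of_le_of_lt tsub_le_self (by simp [lt_top_iff_ne_top])).ne
  have hq1t : (1 - p1) ≠ ⊤ := (lt_of_le_of_lt tsub_le_self (by simp [lt_top_iff_ne_top])).ne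
  rcases le_or_gt k1 k with hcase | hcase
  · obtain ⟨a, rfl⟩ : ∃ a, k = k1 + a := ⟨k - k1, by omega⟩
    obtain ⟨b, hb⟩ : ∃ b, k0 = b + a := ⟨k0 - a, by omega⟩
    obtain ⟨d, hd⟩ : ∃ d, N0 = b + a + d := ⟨N0 - k0, by omega⟩
    obtain ⟨c, hc⟩ : ∃ c, N1 = k1 + a + c := ⟨N1 - (k1 + a), by omega⟩
    rw [show ((k1 + a : ℕ) : ℤ) - (k1 : ℤ) = ((a : ℕ) : ℤ) by push_cast; ring,
      zpow_natCast]
    have e1 : K - (k1 + a) = b := by omega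
    have e2 : N0 - (K - (k1 + a)) = a + d := by omega
    have e3 : N1 - (k1 + a) = c := by omega
    have e4 : N0 - k0 = d := by omega
    have e5 : N1 - k1 = a + c := by omega
    rw [e2, e1, e3, e4, e5]
    have hrw : ρ ^ a * (p0 ^ k0 * (1 - p0) ^ d * (p1 ^ k1 * (1 - p1) ^ (a + c)))
        = ((1 - p0) * p1) ^ a * (p0 ^ k0 * (1 - p0) ^ d * (p1 ^ k1 * (1 - p1) ^ (a + c)))
          / (p0 * (1 - p1)) ^ a := by
      rw [hρ, div_eq_mul_inv, mul_pow, ← ENNReal.inv_pow, div_eq_mul_inv]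
      ring
    rw [hrw, ENNReal.eq_div_iff (pow_ne_zero _ (mul_ne_zero h0l.ne' hq1z))
      (ENNReal.pow_ne_top (ENNReal.mul_ne_top hp0t hq1t))]
    rw [hb]
    ring
  · obtain ⟨a, ha1, rfl⟩ : ∃ a, 1 ≤ a ∧ k1 = k + a := ⟨k1 - k, by omega, by omega⟩
    obtain ⟨d, hd⟩ : ∃ d, N0 = k0 + a + d := ⟨N0 - (k0 + a), by omega⟩
    obtain ⟨c, hc⟩ : ∃ c, N1 = k + a + c := ⟨N1 - (k + a), by omega⟩
    have hneg : ((k : ℤ) - ((k + a : ℕ) : ℤ)) = Int.negSucc (a - 1) := by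
      rw [Int.negSucc_eq]; push_cast; omega
    rw [hneg, zpow_negSucc, show a - 1 + 1 = a by omega]
    have hinv : (ρ ^ a)⁻¹ = (p0 * (1 - p1)) ^ a * (((1 - p0) * p1) ^ a)⁻¹ := by
      rw [hρ, div_eq_mul_inv, mul_pow, ← ENNReal.inv_pow, ENNReal.mul_inv
        (Or.inl (pow_ne_zero _ (mul_ne_zero hq0z h1l.ne')))
        (Or.inl (ENNReal.pow_ne_top (ENNReal.mul_ne_top hq0t hp1t))), inv_inv, mul_comm]
    rw [hinv]
    have e1 : K - k = k0 + a := by omega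
    have e2 : N0 - (K - k) = d := by omega
    have e3 : N1 - k = a + c := by omega
    have e4 : N0 - k0 = a + d := by omega
    have e5 : N1 - (k + a) = c := by omega
    rw [e2, e1, e3, e4, e5]
    have hrw : (p0 * (1 - p1)) ^ a * (((1 - p0) * p1) ^ a)⁻¹
          * (p0 ^ k0 * (1 - p0) ^ (a + d) * (p1 ^ (k + a) * (1 - p1) ^ c))
        = (p0 * (1 - p1)) ^ a * (p0 ^ k0 * (1 - p0) ^ (a + d) * (p1 ^ (k + a) * (1 - p1) ^ c))
          / ((1 - p0) * p1) ^ a := by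
      rw [div_eq_mul_inv]; ring
    rw [hrw, ENNReal.eq_div_iff (pow_ne_zero _ (mul_ne_zero hq0z h1l.ne'))
      (ENNReal.pow_ne_top (ENNReal.mul_ne_top hq0t hp1t))]
    ring

/-- Batch benchmark formula of Section 7: under the changepoint alternative `Q`, the
conditional probability of a specific sequence `z` (with `k0` ones in the first block and
`k1` in the second, `k0 + k1 = K`) given that the total number of ones is `K` equals
`1 / Σ_{k=max(K−N0,0)}^{min(K,N1)} C(N0,K−k) C(N1,k) ρ^{k−k1}` with
`ρ = (1−π₀)π₁ / (π₀(1−π₁))`. -/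
theorem stmt15 (N0 N1 : ℕ) (hN0 : 0 < N0) (hN1 : 0 < N1)
    (p0 p1 : ENNReal) (h0l : 0 < p0) (h0u : p0 < 1) (h1l : 0 < p1) (h1u : p1 < 1)
    (Q : Measure (Fin (N0 + N1) → Bool))
    (hQ : Q = Measure.pi (fun i : Fin (N0 + N1) =>
      if (i : ℕ) < N0 then (PMF.bernoulli p0.toNNReal (by simpa using ENNReal.toNNReal_mono ENNReal.one_ne_top h0u.le)).toMeasure
      else (PMF.bernoulli p1.toNNReal (by simpa using ENNReal.toNNReal_mono ENNReal.one_ne_top h1u.le)).toMeasure))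
    (z : Fin (N0 + N1) → Bool) (K k0 k1 : ℕ)
    (hk0 : k0 = (Finset.univ.filter (fun i : Fin (N0 + N1) =>
      (i : ℕ) < N0 ∧ z i = true)).card)
    (hk1 : k1 = (Finset.univ.filter (fun i : Fin (N0 + N1) =>
      N0 ≤ (i : ℕ) ∧ z i = true)).card)
    (hK : k0 + k1 = K)
    (ρ : ENNReal) (hρ : ρ = (1 - p0) * p1 / (p0 * (1 - p1))) :
    Q[|{w : Fin (N0 + N1) → Bool |
        (Finset.univ.filter (fun i => w i = true)).card = K}] {z} =
      1 / ∑ k ∈ Finset.Icc (max (K - N0) 0) (min K N1),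
        (N0.choose (K - k) * N1.choose k : ENNReal) * ρ ^ ((k : ℤ) - (k1 : ℤ)) := by
  subst hQ
  haveI hpm : ∀ i : Fin (N0+N1), IsProbabilityMeasure
      (if (i:ℕ) < N0 then (PMF.bernoulli p0.toNNReal (by simpa using ENNReal.toNNReal_mono ENNReal.one_ne_top h0u.le)).toMeasure
        else (PMF.bernoulli p1.toNNReal (by simpa using ENNReal.toNNReal_mono ENNReal.one_ne_top h1u.le)).toMeasure) := by
    intro i; split <;> infer_instance
  set Qm : Measure (Fin (N0+N1) → Bool) := Measure.pi (fun i : Fin (N0 + N1) =>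
      if (i : ℕ) < N0 then (PMF.bernoulli p0.toNNReal (by simpa using ENNReal.toNNReal_mono ENNReal.one_ne_top h0u.le)).toMeasure
      else (PMF.bernoulli p1.toNNReal (by simpa using ENNReal.toNNReal_mono ENNReal.one_ne_top h1u.le)).toMeasure) with hQm
  have hk0' : k0 = aC N0 N1 z := hk0
  have hk1' : k1 = bC N0 N1 z := hk1
  have hk0N : k0 ≤ N0 := hk0' ▸ aC_le N0 N1 z
  have hk1N : k1 ≤ N1 := hk1' ▸ bC_le N0 N1 z
  set S : Set (Fin (N0+N1) → Bool) :=
    {w | (Finset.univ.filter (fun i => w i = true)).card = K} with hSdef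
  have hSm : MeasurableSet S := (Set.toFinite S).measurableSet
  have hzS : z ∈ S := by
    show (Finset.univ.filter (fun i => z i = true)).card = K
    rw [total_card, ← hk0', ← hk1', hK]
  rw [ProbabilityTheory.cond_apply hSm]
  rw [Set.inter_eq_self_of_subset_right (Set.singleton_subset_iff.mpr hzS)]
  -- value of Q {z}
  have hQz : Qm {z} = p0 ^ k0 * (1-p0) ^ (N0 - k0) * (p1 ^ k1 * (1-p1) ^ (N1 - k1)) := by
    rw [hQm, singleton_meas N0 N1 p0 p1 h0u.le h1u.le (card_B0 N0 N1) (card_B1 N0 N1) z,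
      ← hk0', ← hk1']
  -- basic nonvanishing facts
  have hp0t : p0 ≠ ⊤ := (h0u.trans (by simp)).ne
  have hp1t : p1 ≠ ⊤ := (h1u.trans (by simp)).ne
  have hq0z : (1 - p0) ≠ 0 := by simp [tsub_eq_zero_iff_le, not_le, h0u]
  have hq1z : (1 - p1) ≠ 0 := by simp [tsub_eq_zero_iff_le, not_le, h1u]
  have hq0t : (1 - p0) ≠ ⊤ := (lt_of_le_of_lt tsub_le_self (by simp [lt_top_iff_ne_top])).ne
  have hq1t : (1 - p1) ≠ ⊤ := (lt_of_le_of_lt tsub_le_self (by simp [lt_top_iff_ne_top])).ne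
  have hQzz : Qm {z} ≠ 0 := by
    rw [hQz]
    exact mul_ne_zero (mul_ne_zero (pow_ne_zero _ h0l.ne') (pow_ne_zero _ hq0z))
      (mul_ne_zero (pow_ne_zero _ h1l.ne') (pow_ne_zero _ hq1z))
  have hQzt : Qm {z} ≠ ⊤ := by
    rw [hQz]
    exact ENNReal.mul_ne_top (ENNReal.mul_ne_top (ENNReal.pow_ne_top hp0t)
      (ENNReal.pow_ne_top hq0t)) (ENNReal.mul_ne_top (ENNReal.pow_ne_top hp1t)
      (ENNReal.pow_ne_top hq1t))
  -- the denominator sum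
  set D : ENNReal := ∑ k ∈ Finset.Icc (K - N0) (min K N1),
      (N0.choose (K - k) * N1.choose k : ENNReal) * ρ ^ ((k : ℤ) - (k1 : ℤ)) with hD
  have hIcc : Finset.Icc (max (K - N0) 0) (min K N1) = Finset.Icc (K - N0) (min K N1) := by
    congr 1
    omega
  -- compute Qm S
  have hQS : Qm S = D * Qm {z} := by
    have hScoe : S = ↑((univ : Finset (Fin (N0+N1) → Bool)).filter
        (fun w => aC N0 N1 w + bC N0 N1 w = K)) := by
      ext w
      simp only [hSdef, Set.mem_setOf_eq, Finset.coe_filter, Finset.mem_univ, true_and,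
        Set.mem_setOf_eq]
      rw [total_card]
    rw [hScoe, meas_finset]
    rw [Finset.sum_congr rfl (fun w _ => singleton_meas N0 N1 p0 p1 h0u.le h1u.le
      (card_B0 N0 N1) (card_B1 N0 N1) w)]
    rw [← Finset.sum_fiberwise_of_maps_to (t := Finset.Icc (K - N0) (min K N1))
      (g := fun w => bC N0 N1 w) ?_ _]
    · rw [hD, Finset.sum_mul]
      apply Finset.sum_congr rfl
      intro k hk
      simp only [Finset.mem_Icc] at hk
      have hkK : k ≤ K := le_trans hk.2 (min_le_left _ _)
      have hkN1 : k ≤ N1 := le_trans hk.2 (min_le_right _ _)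
      have hKk : K - k ≤ N0 := by omega
      have hfib : ((univ : Finset (Fin (N0+N1) → Bool)).filter
            (fun w => aC N0 N1 w + bC N0 N1 w = K)).filter (fun w => bC N0 N1 w = k)
          = (univ : Finset (Fin (N0+N1) → Bool)).filter
            (fun w => aC N0 N1 w = K - k ∧ bC N0 N1 w = k) := by
        rw [Finset.filter_filter]
        apply Finset.filter_congr
        intro w _
        constructor
        · rintro ⟨h1, h2⟩; omega
        · rintro ⟨h1, h2⟩; omega
      rw [hfib]
      have hconst : ∀ w ∈ (univ : Finset (Fin (N0+N1) → Bool)).filter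
            (fun w => aC N0 N1 w = K - k ∧ bC N0 N1 w = k),
          p0 ^ (aC N0 N1 w) * (1-p0) ^ (N0 - aC N0 N1 w)
            * (p1 ^ (bC N0 N1 w) * (1-p1) ^ (N1 - bC N0 N1 w))
          = p0 ^ (K - k) * (1-p0) ^ (N0 - (K - k)) * (p1 ^ k * (1-p1) ^ (N1 - k)) := by
        intro w hw
        simp only [Finset.mem_filter, Finset.mem_univ, true_and] at hw
        rw [hw.1, hw.2]
      rw [Finset.sum_congr rfl hconst, Finset.sum_const, count_AB, nsmul_eq_mul]
      rw [term_eq N0 N1 p0 p1 ρ h0l h0u h1l h1u hρ K k0 k1 k hK hk0N hk1N hkK hkN1 hKk]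
      rw [hQz]
      push_cast
      ring
    · intro w hw
      simp only [Finset.mem_filter, Finset.mem_univ, true_and] at hw
      simp only [Finset.mem_Icc]
      have h1 := aC_le N0 N1 w
      have h2 := bC_le N0 N1 w
      omega
  -- D is nonzero and finite
  have hDz : D ≠ 0 := by
    intro h0
    have hk1mem : k1 ∈ Finset.Icc (K - N0) (min K N1) := by
      simp only [Finset.mem_Icc]
      omega
    have hterm : (N0.choose (K - k1) * N1.choose k1 : ENNReal) * ρ ^ ((k1 : ℤ) - (k1 : ℤ))
        ≤ D := Finset.single_le_sum
          (f := fun k => (N0.choose (K - k) * N1.choose k : ENNReal) * ρ ^ ((k : ℤ) - (k1 : ℤ)))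
          (fun _ _ => by positivity) hk1mem
    rw [h0, le_zero_iff] at hterm
    rw [sub_self, zpow_zero, mul_one] at hterm
    have hc0 : (N0.choose (K - k1)) ≠ 0 := (Nat.choose_pos (by omega)).ne'
    have hc1 : (N1.choose k1) ≠ 0 := (Nat.choose_pos hk1N).ne'
    have : ((N0.choose (K - k1) * N1.choose k1 : ℕ) : ENNReal) = 0 := by
      push_cast at hterm ⊢
      exact hterm
    rw [Nat.cast_eq_zero] at this
    exact (Nat.mul_ne_zero hc0 hc1) this
  have hDt : D ≠ ⊤ := by
    intro ht
    have : Qm S = ⊤ := by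
      rw [hQS, ENNReal.mul_eq_top]
      exact Or.inr ⟨ht, hQzz⟩
    exact (measure_ne_top Qm S) this
  -- final computation
  rw [hQS, hIcc, ← hD]
  rw [ENNReal.mul_inv (Or.inl hDz) (Or.inl hDt), mul_assoc,
    ENNReal.inv_mul_cancel hQzz hQzt, mul_one, one_div]
end

section
/- Let P be a probability measure on Z^∞ under which the coordinates are i.i.d., where the marginal can be any probability measure on Z as P ranges over the null hypothesis (i.e., the null hypothesis contains all power measures R^∞). If S is a process adapted to the natural filtration that is a test supermartingale simultaneously under every such power measure R^∞, then S_n ≤ 1 for all n, R^∞-almost surely for every R. -/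
open MeasureTheory ProbabilityTheory Filter

/-- A function measurable w.r.t. a comap σ-algebra is constant on fibers. -/
lemma aux_comap_const {α β γ : Type*} {mβ : MeasurableSpace β} [MeasurableSpace γ]
    [MeasurableSingletonClass γ] {g : α → β} {f : α → γ}
    (hf : Measurable[mβ.comap g] f) {a a' : α} (h : g a = g a') : f a = f a' := by
  obtain ⟨B, -, hB⟩ := hf (measurableSet_singleton (f a))
  have ha : g a ∈ B := by
    have : a ∈ f ⁻¹' {f a} := rfl
    rw [← hB] at this; exact this
  have ha' : a' ∈ g ⁻¹' B := by rw [Set.mem_preimage, ← h]; exact ha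
  rw [hB] at ha'
  exact ha'.symm

/-- Absolute continuity of finite product measures. -/
lemma aux_pi_ac {Z : Type*} [MeasurableSpace Z] (n : ℕ) {μ ν : Measure Z}
    [IsFiniteMeasure μ] [IsFiniteMeasure ν] (h : μ ≪ ν) :
    (Measure.pi fun _ : Fin n => μ) ≪ (Measure.pi fun _ : Fin n => ν) := by
  induction n with
  | zero =>
      rw [Measure.pi_of_empty, Measure.pi_of_empty]
  | succ n ih =>
      have h1 := measurePreserving_piFinSuccAbove (fun _ : Fin (n + 1) => μ) 0
      have h2 := measurePreserving_piFinSuccAbove (fun _ : Fin (n + 1) => ν) 0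
      rw [← (h1.symm _).map_eq, ← (h2.symm _).map_eq]
      exact (h.prod ih).map (MeasurableEquiv.piFinSuccAbove (fun _ : Fin (n + 1) => Z) 0).symm.measurable

/-- A limit argument in `ℝ≥0∞`. -/
lemma aux_limit {a b : ENNReal} (hb : b ≠ ⊤)
    (h : ∀ j : ℕ, (1 - (j : ENNReal)⁻¹) * a ≤ b) : a ≤ b := by
  rcases eq_or_ne a ⊤ with ha | ha
  · exfalso
    have h2 := h 2
    rw [ha] at h2
    have hlt : (((2 : ℕ) : ENNReal))⁻¹ < 1 := by
      rw [ENNReal.inv_lt_one]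
      exact_mod_cast one_lt_two
    have hcne : (1 - ((2 : ℕ) : ENNReal)⁻¹) ≠ 0 := (tsub_pos_of_lt hlt).ne'
    rw [ENNReal.mul_top hcne] at h2
    exact hb (top_le_iff.1 h2)
  · have h' : ∀ j : ℕ, 2 ≤ j → (1 - 1 / (j : ℝ)) * a.toReal ≤ b.toReal := by
      intro j hj
      have hj1 : (1 : ENNReal) ≤ (j : ENNReal) := by
        exact_mod_cast Nat.one_le_cast.2 (le_trans one_le_two hj)
      have hinv : ((j : ENNReal))⁻¹ ≤ 1 := ENNReal.inv_le_one.2 hj1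
      have := ENNReal.toReal_mono hb (h j)
      rw [ENNReal.toReal_mul, ENNReal.toReal_sub_of_le hinv ENNReal.one_ne_top,
        ENNReal.toReal_inv, ENNReal.toReal_one, ENNReal.toReal_natCast] at this
      rw [one_div]
      exact this
    have hlim : Filter.Tendsto (fun j : ℕ => (1 - 1 / (j : ℝ)) * a.toReal) atTop
        (nhds ((1 - 0) * a.toReal)) :=
      ((tendsto_const_nhds.sub tendsto_one_div_atTop_nhds_zero_nat).mul_const _)
    rw [sub_zero, one_mul] at hlim
    have : a.toReal ≤ b.toReal :=
      le_of_tendsto hlim (Filter.eventually_atTop.2 ⟨2, h'⟩)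
    exact (ENNReal.toReal_le_toReal ha hb).1 this

/-- No gambling against the model of randomness without forgetting (Theorem 17 of
Ramdas et al. 2022): if `S` is a test supermartingale, w.r.t. the natural filtration of
the coordinate process on `Z^∞`, simultaneously under every i.i.d. (power) measure, then
`S_n ≤ 1` almost surely under every such measure. -/
theorem stmt19 {Z : Type*} [mZ : MeasurableSpace Z]
    (ℱ : Filtration ℕ (MeasurableSpace.pi : MeasurableSpace (ℕ → Z)))
    (hℱ : ∀ n, ℱ n = ⨆ i ∈ Set.Iic n, mZ.comap (fun ω : ℕ → Z => ω i))
    (P : Measure Z → Measure (ℕ → Z))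
    (hPprob : ∀ R : Measure Z, IsProbabilityMeasure R → IsProbabilityMeasure (P R))
    (hPiid : ∀ R : Measure Z, IsProbabilityMeasure R →
      iIndepFun (fun n (ω : ℕ → Z) => ω n) (P R))
    (hPmarg : ∀ R : Measure Z, IsProbabilityMeasure R →
      ∀ n, (P R).map (fun ω : ℕ → Z => ω n) = R)
    (S : ℕ → (ℕ → Z) → ℝ)
    (hnn : ∀ n ω, 0 ≤ S n ω)
    (hsuper : ∀ R : Measure Z, IsProbabilityMeasure R → Supermartingale S ℱ (P R))
    (hS0 : ∀ R : Measure Z, IsProbabilityMeasure R → S 0 =ᵐ[P R] (fun _ => 1)) :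
    ∀ R : Measure Z, IsProbabilityMeasure R → ∀ n, ∀ᵐ ω ∂(P R), S n ω ≤ 1 := by
  classical
  intro R hR
  rcases isEmpty_or_nonempty Z with hZ | hZ
  · have h1 := hR.measure_univ
    rw [Set.univ_eq_empty_iff.2 hZ, measure_empty] at h1
    exact absurd h1 zero_ne_one
  obtain ⟨z₀⟩ := hZ
  -- prefix maps
  set π : ∀ m : ℕ, (ℕ → Z) → (Fin (m + 1) → Z) := fun m ω i => ω i with hπdef
  have hπmeas : ∀ m, Measurable (π m) := fun m =>
    measurable_pi_lambda _ fun i => measurable_pi_apply _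
  -- the filtration is the comap of the prefix map
  have hcomap : ∀ m, ℱ m = MeasurableSpace.comap (π m) MeasurableSpace.pi := by
    intro m
    rw [hℱ m]
    have hpi : (MeasurableSpace.pi : MeasurableSpace (Fin (m + 1) → Z))
        = ⨆ i : Fin (m + 1), mZ.comap fun x => x i := rfl
    rw [hpi, MeasurableSpace.comap_iSup]
    simp_rw [MeasurableSpace.comap_comp]
    apply le_antisymm
    · refine iSup₂_le fun i hi => ?_
      have hle : i < m + 1 := Nat.lt_succ_of_le hi
      have heq : (fun ω : ℕ → Z => ω i)
          = (fun x : Fin (m + 1) → Z => x ⟨i, hle⟩) ∘ π m := rfl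
      rw [heq]
      exact le_iSup (fun j : Fin (m + 1) =>
        mZ.comap ((fun x : Fin (m + 1) → Z => x j) ∘ π m)) ⟨i, hle⟩
    · refine iSup_le fun i => ?_
      have heq : ((fun x : Fin (m + 1) → Z => x i) ∘ π m)
          = fun ω : ℕ → Z => ω i.val := rfl
      rw [heq]
      exact le_iSup₂ (f := fun j (_ : j ∈ Set.Iic m) => mZ.comap fun ω : ℕ → Z => ω j)
        i.val (Set.mem_Iic.2 (Nat.lt_succ_iff.1 i.isLt))
  -- extension map
  set ex : ∀ m : ℕ, (Fin (m + 1) → Z) → (ℕ → Z) :=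
    fun m x i => if h : i < m + 1 then x ⟨i, h⟩ else z₀ with hexdef
  have hπex : ∀ m x, π m (ex m x) = x := by
    intro m x
    funext i
    simp only [hπdef, hexdef, i.isLt, dif_pos, Fin.eta]
  -- measurability of S m w.r.t. the comap σ-algebra
  have hdirac : IsProbabilityMeasure (Measure.dirac z₀) := Measure.dirac.isProbabilityMeasure
  have hSmeas : ∀ m, Measurable[MeasurableSpace.comap (π m) MeasurableSpace.pi] (S m) := by
    intro m
    have h := ((hsuper (Measure.dirac z₀) hdirac).1 m).measurable
    rwa [hcomap m] at h
  -- the finite-dimensional representation of S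
  set f : ∀ m : ℕ, (Fin (m + 1) → Z) → ℝ := fun m x => S m (ex m x) with hfdef
  set F : ∀ m : ℕ, (Fin (m + 1) → Z) → ENNReal :=
    fun m x => ENNReal.ofReal (f m x) with hFdef
  have hfac : ∀ m ω, S m ω = f m (π m ω) := by
    intro m ω
    exact aux_comap_const (hSmeas m) (hπex m (π m ω)).symm
  have hexmeas : ∀ m, Measurable[MeasurableSpace.pi, MeasurableSpace.comap (π m)
      MeasurableSpace.pi] (ex m) := by
    intro m
    rw [measurable_iff_comap_le, MeasurableSpace.comap_comp]
    have : (π m) ∘ (ex m) = id := funext (hπex m)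
    rw [this, MeasurableSpace.comap_id]
  have hfmeas : ∀ m, Measurable (f m) := fun m => (hSmeas m).comp (hexmeas m)
  have hFmeas : ∀ m, Measurable (F m) := fun m => (hfmeas m).ennreal_ofReal
  have hofReal : ∀ m ω, ENNReal.ofReal (S m ω) = F m (π m ω) := by
    intro m ω
    rw [hfac m ω]
  -- pushforward of P ν under π m is the product measure
  have hmap : ∀ (ν : Measure Z), IsProbabilityMeasure ν → ∀ m,
      (P ν).map (π m) = Measure.pi (fun _ : Fin (m + 1) => ν) := by
    intro ν hν m
    haveI := hν
    haveI := hPprob ν hν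
    refine (Measure.pi_eq fun s hs => ?_).symm
    rw [Measure.map_apply (hπmeas m) (MeasurableSet.univ_pi hs)]
    set s' : ℕ → Set Z := fun i => if h : i < m + 1 then s ⟨i, h⟩ else Set.univ with hs'def
    have hs'meas : ∀ i, MeasurableSet (s' i) := by
      intro i
      simp only [hs'def]
      split_ifs with h
      · exact hs _
      · exact MeasurableSet.univ
    have hpre : (π m) ⁻¹' (Set.univ.pi s)
        = ⋂ i ∈ Finset.range (m + 1), (fun ω : ℕ → Z => ω i) ⁻¹' s' i := by
      ext ω
      simp only [Set.mem_preimage, Set.mem_univ_pi, Set.mem_iInter, Finset.mem_range]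
      constructor
      · intro h i hi
        have := h ⟨i, hi⟩
        simpa only [hs'def, hi, dif_pos] using this
      · intro h i
        have := h i.val i.isLt
        simpa only [hs'def, i.isLt, dif_pos, Fin.eta] using this
    rw [hpre]
    rw [(hPiid ν hν).meas_biInter (fun i _ => ⟨s' i, hs'meas i, rfl⟩)]
    have hfactor : ∀ i : ℕ, (P ν) ((fun ω : ℕ → Z => ω i) ⁻¹' s' i) = ν (s' i) := by
      intro i
      conv_rhs => rw [← hPmarg ν hν i]
      rw [Measure.map_apply (measurable_pi_apply i) (hs'meas i)]
    calc (∏ i ∈ Finset.range (m + 1), (P ν) ((fun ω : ℕ → Z => ω i) ⁻¹' s' i))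
        = ∏ i ∈ Finset.range (m + 1), ν (s' i) :=
          Finset.prod_congr rfl fun i _ => hfactor i
      _ = ∏ i : Fin (m + 1), ν (s' i.val) := (Fin.prod_univ_eq_prod_range _ _).symm
      _ = ∏ i : Fin (m + 1), ν (s i) := by
          refine Finset.prod_congr rfl fun i _ => ?_
          congr 1
          simp only [hs'def, i.isLt, dif_pos, Fin.eta]
  -- measurability of snoc
  have hsnocmeas : ∀ k : ℕ, Measurable
      (fun p : Z × (Fin (k + 1) → Z) => (Fin.snoc p.2 p.1 : Fin (k + 2) → Z)) := by
    intro k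
    apply measurable_pi_lambda
    intro i
    refine Fin.lastCases ?_ (fun j => ?_) i
    · simp only [Fin.snoc_last]
      exact measurable_fst
    · simp only [Fin.snoc_castSucc]
      exact (measurable_pi_apply j).comp measurable_snd
  have hsnocmeas' : ∀ k : ℕ, Measurable
      (fun p : (Fin (k + 1) → Z) × Z => (Fin.snoc p.1 p.2 : Fin (k + 2) → Z)) :=
    fun k => (hsnocmeas k).comp measurable_swap
  have hinitmeas : ∀ k : ℕ, Measurable (fun w : Fin (k + 2) → Z => Fin.init w) := by
    intro k
    exact measurable_pi_lambda _ fun i => measurable_pi_apply _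
  -- the key set-integral inequality
  have hkey : ∀ (ν : Measure Z), IsProbabilityMeasure ν → ∀ (k : ℕ)
      (B : Set (Fin (k + 1) → Z)), MeasurableSet B →
      ∫⁻ x in B, (∫⁻ y, F (k + 1) (Fin.snoc x y) ∂ν) ∂(Measure.pi fun _ : Fin (k + 1) => ν)
        ≤ ∫⁻ x in B, F k x ∂(Measure.pi fun _ : Fin (k + 1) => ν) := by
    intro ν hν k B hB
    haveI := hPprob ν hν
    have hsint : ∫ ω in (π k) ⁻¹' B, S (k + 1) ω ∂(P ν)
        ≤ ∫ ω in (π k) ⁻¹' B, S k ω ∂(P ν) := by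
      refine (hsuper ν hν).setIntegral_le (Nat.le_succ k) ?_
      rw [hcomap k]
      exact ⟨B, hB, rfl⟩
    have hlint : ∫⁻ ω in (π k) ⁻¹' B, ENNReal.ofReal (S (k + 1) ω) ∂(P ν)
        ≤ ∫⁻ ω in (π k) ⁻¹' B, ENNReal.ofReal (S k ω) ∂(P ν) := by
      rw [← ofReal_integral_eq_lintegral_ofReal
          (((hsuper ν hν).integrable (k + 1)).restrict) (ae_of_all _ fun ω => hnn _ ω),
        ← ofReal_integral_eq_lintegral_ofReal
          (((hsuper ν hν).integrable k).restrict) (ae_of_all _ fun ω => hnn _ ω)]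
      exact ENNReal.ofReal_le_ofReal hsint
    -- rewrite RHS
    have hRHS : ∫⁻ ω in (π k) ⁻¹' B, ENNReal.ofReal (S k ω) ∂(P ν)
        = ∫⁻ x in B, F k x ∂(Measure.pi fun _ : Fin (k + 1) => ν) := by
      simp_rw [hofReal k]
      rw [← hmap ν hν k, setLIntegral_map hB (hFmeas k) (hπmeas k)]
    -- rewrite LHS
    set r : (Fin (k + 2) → Z) → (Fin (k + 1) → Z) := fun w => Fin.init w with hrdef
    have hrmeas : Measurable r := hinitmeas k
    have hπcomp : ∀ ω, r (π (k + 1) ω) = π k ω := by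
      intro ω
      funext j
      show ω ((Fin.castSucc j : Fin (k + 2)) : ℕ) = ω (j : ℕ)
      rw [Fin.coe_castSucc]
    have hLHS : ∫⁻ ω in (π k) ⁻¹' B, ENNReal.ofReal (S (k + 1) ω) ∂(P ν)
        = ∫⁻ x in B, (∫⁻ y, F (k + 1) (Fin.snoc x y) ∂ν)
            ∂(Measure.pi fun _ : Fin (k + 1) => ν) := by
      simp_rw [hofReal (k + 1)]
      have h2 : (π k) ⁻¹' B = (π (k + 1)) ⁻¹' (r ⁻¹' B) := by
        ext ω
        simp only [Set.mem_preimage, hπcomp]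
      rw [h2, ← setLIntegral_map (hrmeas hB) (hFmeas (k + 1)) (hπmeas (k + 1)),
        hmap ν hν (k + 1)]
      -- now use the measure-preserving equivalence
      have hmp := measurePreserving_piFinSuccAbove (fun _ : Fin (k + 2) => ν) (Fin.last (k + 1))
      set e := MeasurableEquiv.piFinSuccAbove (fun _ : Fin (k + 2) => Z) (Fin.last (k + 1))
        with hedef
      have hesymm : ∀ p : Z × (Fin (k + 1) → Z), e.symm p = Fin.snoc p.2 p.1 := by
        intro p
        funext i
        refine Fin.lastCases ?_ (fun j => ?_) i
        · rw [Fin.snoc_last]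
          simp [hedef, MeasurableEquiv.piFinSuccAbove, Fin.insertNthEquiv]
        · rw [Fin.snoc_castSucc, ← Fin.succAbove_last]
          simp [hedef, MeasurableEquiv.piFinSuccAbove, Fin.insertNthEquiv]
      have hsymm := hmp.symm e
      rw [← hsymm.setLIntegral_comp_preimage_emb e.symm.measurableEmbedding]
      have hpre : e.symm ⁻¹' (r ⁻¹' B) = Prod.snd ⁻¹' B := by
        ext p
        simp only [Set.mem_preimage, hesymm, hrdef, Fin.init_snoc]
      have hintegrand : ∀ p : Z × (Fin (k + 1) → Z),
          F (k + 1) (e.symm p) = F (k + 1) (Fin.snoc p.2 p.1) := by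
        intro p
        rw [hesymm]
      simp_rw [hintegrand, hpre]
      rw [← Set.univ_prod, ← Measure.prod_restrict, Measure.restrict_univ]
      have hcm : Measurable (fun p : Z × (Fin (k + 1) → Z) =>
          F (k + 1) (Fin.snoc p.2 p.1)) := (hFmeas (k + 1)).comp (hsnocmeas k)
      rw [lintegral_prod_symm _ hcm.aemeasurable]
    rw [← hRHS, ← hLHS]
    exact hlint
  -- the one-step decrease under P R
  have hstep : ∀ k : ℕ, ∀ᵐ ω ∂(P R), S (k + 1) ω ≤ S k ω := by
    intro k
    haveI := hPprob R hR
    set piR : Measure (Fin (k + 1) → Z) := Measure.pi fun _ => R with hpiRdef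
    have hz : ∀ z : Z, ∀ᵐ x ∂piR, F (k + 1) (Fin.snoc x z) ≤ F k x := by
      intro z
      have hae : ∀ j : ℕ, ∀ᵐ x ∂piR,
          (1 - (j : ENNReal)⁻¹) * F (k + 1) (Fin.snoc x z) ≤ F k x := by
        intro j
        rcases le_or_gt j 1 with hj | hj
        · -- trivial: coefficient is 0
          refine ae_of_all _ fun x => ?_
          have : (1 - (j : ENNReal)⁻¹) = 0 := by
            interval_cases j <;> simp [ENNReal.sub_top]
          rw [this, zero_mul]
          exact zero_le
        · have hj2 : 2 ≤ j := hj
          have hj1 : (1 : ENNReal) ≤ (j : ENNReal) :=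
            Nat.one_le_cast.2 (le_trans one_le_two hj2)
          have hinv1 : ((j : ENNReal))⁻¹ ≤ 1 := ENNReal.inv_le_one.2 hj1
          have hinvne : ((j : ENNReal))⁻¹ ≠ 0 :=
            ENNReal.inv_ne_zero.2 (ENNReal.natCast_ne_top j)
          set νj : Measure Z :=
            (j : ENNReal)⁻¹ • R + (1 - (j : ENNReal)⁻¹) • Measure.dirac z with hνjdef
          haveI hνjprob : IsProbabilityMeasure νj := by
            constructor
            simp only [hνjdef, Measure.coe_add, Pi.add_apply, Measure.smul_apply,
              measure_univ, smul_eq_mul, mul_one]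
            exact add_tsub_cancel_of_le hinv1
          have hsnocy : ∀ x : Fin (k + 1) → Z,
              Measurable fun y : Z => F (k + 1) (Fin.snoc x y) := by
            intro x
            exact (hFmeas (k + 1)).comp
              ((hsnocmeas k).comp (measurable_id.prodMk measurable_const))
          have hH : ∀ᵐ x ∂(Measure.pi fun _ : Fin (k + 1) => νj),
              (∫⁻ y, F (k + 1) (Fin.snoc x y) ∂νj) ≤ F k x := by
            refine ae_le_of_forall_setLIntegral_le_of_sigmaFinite ?_
              fun s hs _ => hkey νj hνjprob k s hs
            exact Measurable.lintegral_prod_right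
              ((hFmeas (k + 1)).comp (hsnocmeas' k))
          have hRac : R ≪ νj := by
            refine Measure.AbsolutelyContinuous.mk fun s hs hs0 => ?_
            simp only [hνjdef, Measure.add_apply, Measure.smul_apply,
              smul_eq_mul, add_eq_zero] at hs0
            rcases mul_eq_zero.1 hs0.1 with h | h
            · exact absurd h hinvne
            · exact h
          have hac : piR ≪ Measure.pi fun _ : Fin (k + 1) => νj := aux_pi_ac (k + 1) hRac
          have hH' := Filter.Eventually.filter_mono hac.ae_le hH
          filter_upwards [hH'] with x hx
          calc (1 - (j : ENNReal)⁻¹) * F (k + 1) (Fin.snoc x z)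
              = ∫⁻ y, F (k + 1) (Fin.snoc x y)
                  ∂((1 - (j : ENNReal)⁻¹) • Measure.dirac z) := by
                rw [lintegral_smul_measure, lintegral_dirac' _ (hsnocy x), smul_eq_mul]
            _ ≤ ∫⁻ y, F (k + 1) (Fin.snoc x y) ∂νj := by
                rw [hνjdef, lintegral_add_measure]
                exact le_add_self
            _ ≤ F k x := hx
      have hall : ∀ᵐ x ∂piR, ∀ j : ℕ,
          (1 - (j : ENNReal)⁻¹) * F (k + 1) (Fin.snoc x z) ≤ F k x := ae_all_iff.2 hae
      filter_upwards [hall] with x hx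
      exact aux_limit ENNReal.ofReal_ne_top hx
    -- Fubini: combine the per-z statements
    set N : Set (Z × (Fin (k + 1) → Z)) :=
      {p | F k p.2 < F (k + 1) (Fin.snoc p.2 p.1)} with hNdef
    have hNmeas : MeasurableSet N :=
      measurableSet_lt ((hFmeas k).comp measurable_snd)
        ((hFmeas (k + 1)).comp (hsnocmeas k))
    have hNnull : (R.prod piR) N = 0 := by
      rw [Measure.measure_prod_null hNmeas]
      refine ae_of_all _ fun z => ?_
      have hsec : Prod.mk z ⁻¹' N = {x | ¬ F (k + 1) (Fin.snoc x z) ≤ F k x} := by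
        ext x
        simp only [hNdef, Set.mem_preimage, Set.mem_setOf_eq, not_le]
      show piR (Prod.mk z ⁻¹' N) = (0 : Z → ENNReal) z
      rw [hsec, Pi.zero_apply]
      exact ae_iff.1 (hz z)
    have hmp := measurePreserving_piFinSuccAbove (fun _ : Fin (k + 2) => R) (Fin.last (k + 1))
    set e := MeasurableEquiv.piFinSuccAbove (fun _ : Fin (k + 2) => Z) (Fin.last (k + 1))
      with hedef
    set D : Set (Fin (k + 2) → Z) := {w | F k (Fin.init w) < F (k + 1) w} with hDdef
    have hDmeas : MeasurableSet D :=
      measurableSet_lt ((hFmeas k).comp (hinitmeas k)) (hFmeas (k + 1))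
    have hpreD : e ⁻¹' N = D := by
      ext w
      have he : e w = (w (Fin.last (k + 1)),
          fun j => w ((Fin.last (k + 1)).succAbove j)) := rfl
      simp only [Set.mem_preimage, he, hNdef, hDdef, Set.mem_setOf_eq]
      have h1 : (fun j => w ((Fin.last (k + 1)).succAbove j)) = Fin.init w := by
        funext j
        rw [Fin.succAbove_last]
        rfl
      rw [h1, Fin.snoc_init_self]
    have hDnull : (Measure.pi fun _ : Fin (k + 2) => R) D = 0 := by
      rw [← hpreD, hmp.measure_preimage hNmeas.nullMeasurableSet]
      exact hNnull
    have hpull : (P R) ((π (k + 1)) ⁻¹' D) = 0 := by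
      rw [← Measure.map_apply (hπmeas (k + 1)) hDmeas, hmap R hR (k + 1)]
      exact hDnull
    rw [ae_iff]
    refine measure_mono_null ?_ hpull
    intro ω hω
    simp only [Set.mem_setOf_eq, not_le] at hω
    show π (k + 1) ω ∈ D
    have hi : Fin.init (π (k + 1) ω) = π k ω := by
      funext j
      show ω ((Fin.castSucc j : Fin (k + 2)) : ℕ) = ω (j : ℕ)
      rw [Fin.coe_castSucc]
    simp only [hDdef, Set.mem_setOf_eq, hi]
    rw [← hofReal k ω, ← hofReal (k + 1) ω]
    exact (ENNReal.ofReal_lt_ofReal_iff (lt_of_le_of_lt (hnn k ω) hω)).2 hω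
  -- conclusion by induction
  intro n
  induction n with
  | zero =>
      filter_upwards [hS0 R hR] with ω h
      exact le_of_eq h
  | succ k ih =>
      filter_upwards [ih, hstep k] with ω h1 h2
      exact h2.trans h1
end
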